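/- Let A be an n×n Hermitian matrix with eigenvalues λ₁(A),…,λₙ(A) and unit eigenvectors v₁,…,vₙ, and let M_j be the j-th principal minor. Then |v_{i,j}|² · p_A'(λ_i(A)) = p_{M_j}(λ_i(A)), where p_A and p_{M_j} are the characteristic polynomials of A and M_j. -/

import Mathlib

open Polynomial Matrix Finset in
lemma my_eval_charpoly {m : Type*} [Fintype m] [DecidableEq m] (A : Matrix m m ℂ) (x : ℂ) :
    A.charpoly.eval x = (x • (1 : Matrix m m ℂ) - A).det := by
  rw [Matrix.charpoly, ← Polynomial.coe_evalRingHom, RingHom.map_det]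
  congr 1
  ext a b
  by_cases h : a = b
  · subst h; simp [Matrix.charmatrix_apply_eq, Matrix.one_apply]
  · simp [Matrix.charmatrix_apply_ne _ _ _ h, Matrix.one_apply_ne h]


open Polynomial in
/-- The eigenvector-eigenvalue identity, characteristic polynomial form. -/
theorem eigenvector_eigenvalue_identity_charpoly {n : ℕ}
    (A : Matrix (Fin (n+1)) (Fin (n+1)) ℂ) (hA : A.IsHermitian)
    (lam : Fin (n+1) → ℝ) (v : Fin (n+1) → Fin (n+1) → ℂ)
    (horth : ∀ i k, dotProduct (star (v i)) (v k) = if i = k then 1 else 0)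
    (heig : ∀ i, A.mulVec (v i) = (lam i : ℂ) • v i)
    (i j : Fin (n+1)) :
    (‖v i j‖ : ℂ) ^ 2 * (Polynomial.derivative A.charpoly).eval (lam i : ℂ)
      = (A.submatrix j.succAbove j.succAbove).charpoly.eval (lam i : ℂ) := by
  open Matrix Finset in
  set t : ℂ := (lam i : ℂ) with ht
  set U : Matrix (Fin (n+1)) (Fin (n+1)) ℂ := Matrix.of fun r k => v k r with hU
  set D : Matrix (Fin (n+1)) (Fin (n+1)) ℂ := Matrix.diagonal (fun m => (lam m : ℂ)) with hD
  have h1 : Uᴴ * U = 1 := by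
    ext a b
    rw [Matrix.mul_apply, Matrix.one_apply, ← horth a b]
    simp [Matrix.conjTranspose_apply, hU, dotProduct]
  have h2 : U * Uᴴ = 1 := mul_eq_one_comm.mp h1
  have hAU : A * U = U * D := by
    ext r k
    have h := congrFun (heig k) r
    simp only [Matrix.mulVec, dotProduct, Pi.smul_apply, smul_eq_mul] at h
    rw [Matrix.mul_apply, Matrix.mul_diagonal]
    simpa [hU, mul_comm] using h
  have hAeq : A = U * D * Uᴴ := by
    rw [← hAU, Matrix.mul_assoc, h2, Matrix.mul_one]
  set Dt : Matrix (Fin (n+1)) (Fin (n+1)) ℂ := Matrix.diagonal (fun m => t - (lam m : ℂ)) with hDt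
  have hB : t • (1 : Matrix (Fin (n+1)) (Fin (n+1)) ℂ) - A = U * Dt * Uᴴ := by
    have hd : t • (1 : Matrix (Fin (n+1)) (Fin (n+1)) ℂ) - D = Dt := by
      ext a b
      by_cases h : a = b
      · subst h; simp [hD, hDt]
      · simp [hD, hDt, Matrix.one_apply_ne h, Matrix.diagonal_apply_ne _ h]
    rw [← hd, Matrix.mul_sub, Matrix.sub_mul, ← hAeq]
    congr 1
    rw [Matrix.mul_smul, Matrix.mul_one, Matrix.smul_mul, h2]
  have haU : U.adjugate = U.det • Uᴴ := by
    calc U.adjugate = U.adjugate * (U * Uᴴ) := by rw [h2, Matrix.mul_one]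
    _ = (U.adjugate * U) * Uᴴ := by rw [Matrix.mul_assoc]
    _ = U.det • Uᴴ := by rw [Matrix.adjugate_mul, Matrix.smul_mul, Matrix.one_mul]
  have haUH : Uᴴ.adjugate = Uᴴ.det • U := by
    calc Uᴴ.adjugate = (U * Uᴴ) * Uᴴ.adjugate := by rw [h2, Matrix.one_mul]
    _ = U * (Uᴴ * Uᴴ.adjugate) := by rw [Matrix.mul_assoc]
    _ = Uᴴ.det • U := by rw [Matrix.mul_adjugate, Matrix.mul_smul, Matrix.mul_one]
  have hdet1 : Uᴴ.det * U.det = 1 := by rw [← Matrix.det_mul, h1, Matrix.det_one]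
  have hadjB : (t • (1 : Matrix (Fin (n+1)) (Fin (n+1)) ℂ) - A).adjugate
      = U * Dt.adjugate * Uᴴ := by
    rw [hB, Matrix.adjugate_mul_distrib, Matrix.adjugate_mul_distrib, haU, haUH]
    simp only [Matrix.smul_mul, Matrix.mul_smul, smul_smul, Matrix.mul_assoc]
    rw [mul_comm, hdet1, one_smul]
  have hadjDt : Dt.adjugate
      = Matrix.diagonal (fun k => ∏ m ∈ Finset.univ.erase k, (t - (lam m : ℂ))) :=
    Matrix.adjugate_diagonal _
  have hDcp : D.charpoly = ∏ m : Fin (n+1), (X - C ((lam m : ℝ) : ℂ)) := by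
    have hcm : D.charmatrix = Matrix.diagonal (fun m => (X : ℂ[X]) - C ((lam m : ℝ) : ℂ)) := by
      ext a b
      by_cases h : a = b
      · subst h; simp [hD]
      · simp [Matrix.charmatrix_apply_ne _ _ _ h, hD, Matrix.diagonal_apply_ne _ h]
    rw [Matrix.charpoly, hcm, Matrix.det_diagonal]
  have hAcp : A.charpoly = D.charpoly := by
    have hcmA : A.charmatrix = (U.map C) * D.charmatrix * (Uᴴ.map C) := by
      have hscal : ∀ M : Matrix (Fin (n+1)) (Fin (n+1)) ℂ[X],
          Matrix.scalar (Fin (n+1)) (X : ℂ[X]) * M = M * Matrix.scalar (Fin (n+1)) (X : ℂ[X]) :=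
        fun M => (Matrix.scalar_commute _ (fun r' => Commute.all _ _) M).eq
      have hmm : ∀ M N : Matrix (Fin (n+1)) (Fin (n+1)) ℂ,
          (M * N).map (C : ℂ →+* ℂ[X]) = M.map C * N.map C := fun M N => by
        simpa [RingHom.mapMatrix_apply] using (C : ℂ →+* ℂ[X]).mapMatrix.map_mul M N
      have h2' : (U.map (C : ℂ →+* ℂ[X])) * (Uᴴ.map C) = 1 := by
        rw [← hmm, h2]
        simpa [RingHom.mapMatrix_apply] using (C : ℂ →+* ℂ[X]).mapMatrix.map_one
      rw [Matrix.charmatrix, Matrix.charmatrix, Matrix.mul_sub, Matrix.sub_mul]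
      congr 1
      · rw [← hscal (U.map C), Matrix.mul_assoc, h2', Matrix.mul_one]
      · rw [RingHom.mapMatrix_apply, RingHom.mapMatrix_apply, hAeq, hmm, hmm]
    rw [Matrix.charpoly, Matrix.charpoly, hcmA, Matrix.det_mul, Matrix.det_mul]
    have hu : (U.map (C : ℂ →+* ℂ[X])).det * (Uᴴ.map (C : ℂ →+* ℂ[X])).det = 1 := by
      rw [show (U.map (C : ℂ →+* ℂ[X])) = (C : ℂ →+* ℂ[X]).mapMatrix U from rfl,
        show (Uᴴ.map (C : ℂ →+* ℂ[X])) = (C : ℂ →+* ℂ[X]).mapMatrix Uᴴ from rfl,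
        ← RingHom.map_det, ← RingHom.map_det, ← _root_.map_mul, mul_comm, hdet1, _root_.map_one]
    calc (U.map (C : ℂ →+* ℂ[X])).det * D.charmatrix.det * (Uᴴ.map (C : ℂ →+* ℂ[X])).det
        = ((U.map (C : ℂ →+* ℂ[X])).det * (Uᴴ.map (C : ℂ →+* ℂ[X])).det) * D.charmatrix.det := by
          ring
      _ = D.charmatrix.det := by rw [hu, one_mul]
  set P : ℂ := ∏ m ∈ Finset.univ.erase i, (t - (lam m : ℂ)) with hP
  have hderiv : (derivative A.charpoly).eval t = P := by
    rw [hAcp, hDcp]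
    set S : Multiset ℂ := Multiset.map (fun m => ((lam m : ℝ) : ℂ)) Finset.univ.val with hS
    have hprod : (∏ m : Fin (n+1), ((X : ℂ[X]) - C ((lam m : ℝ) : ℂ)))
        = (Multiset.map (fun a => (X : ℂ[X]) - C a) S).prod := by
      rw [hS, Multiset.map_map, Finset.prod_eq_multiset_prod]
      rfl
    have hmem : t ∈ S := by
      rw [hS]
      exact Multiset.mem_map.mpr ⟨i, by simp, rfl⟩
    rw [hprod, Polynomial.eval_multiset_prod_X_sub_C_derivative hmem]
    have hSe : S.erase t = Multiset.map (fun m => ((lam m : ℝ) : ℂ)) (Finset.univ.erase i).val := by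
      have huv : (Finset.univ : Finset (Fin (n+1))).val
          = i ::ₘ (Finset.univ.erase i).val := by
        rw [Finset.erase_val]
        exact (Multiset.cons_erase (by simp : i ∈ (Finset.univ : Finset (Fin (n+1))).val)).symm
      rw [hS, huv, Multiset.map_cons, Multiset.erase_cons_head]
    rw [hSe, Multiset.map_map, hP, Finset.prod_eq_multiset_prod]
    rfl
  have hzero : ∀ k, k ≠ i → (∏ m ∈ Finset.univ.erase k, (t - (lam m : ℂ))) = 0 := by
    intro k hk
    exact Finset.prod_eq_zero (Finset.mem_erase.mpr ⟨Ne.symm hk, Finset.mem_univ i⟩)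
      (by rw [ht, sub_self])
  have hentry : (U * Dt.adjugate * Uᴴ) j j = v i j * P * (starRingEnd ℂ) (v i j) := by
    rw [hadjDt, Matrix.mul_apply]
    rw [Finset.sum_eq_single i]
    · rw [Matrix.mul_diagonal, Matrix.conjTranspose_apply]
      simp [hU, hP]
    · intro k _ hk
      rw [Matrix.mul_diagonal, hzero k hk, mul_zero, zero_mul]
    · intro h; exact absurd (Finset.mem_univ i) h
  have hRHS : (A.submatrix j.succAbove j.succAbove).charpoly.eval t
      = v i j * P * (starRingEnd ℂ) (v i j) := by
    rw [my_eval_charpoly]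
    have hsub : t • (1 : Matrix (Fin n) (Fin n) ℂ) - A.submatrix j.succAbove j.succAbove
        = (t • (1 : Matrix (Fin (n+1)) (Fin (n+1)) ℂ) - A).submatrix j.succAbove j.succAbove := by
      ext a b
      rcases eq_or_ne a b with rfl | h
      · simp [Matrix.submatrix_apply]
      · simp [Matrix.submatrix_apply, Matrix.one_apply_ne h,
          Matrix.one_apply_ne (fun hh => h (Fin.succAbove_right_injective hh))]
    rw [hsub]
    have hadj := Matrix.adjugate_fin_succ_eq_det_submatrix
      (t • (1 : Matrix (Fin (n+1)) (Fin (n+1)) ℂ) - A) j j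
    rw [Even.neg_one_pow ⟨(j : ℕ), rfl⟩, one_mul] at hadj
    rw [← hadj, hadjB, hentry]
  rw [hderiv, hRHS]
  have hz : ((‖v i j‖ : ℂ)) ^ 2 = v i j * (starRingEnd ℂ) (v i j) := by
    rw [Complex.mul_conj]
    norm_cast
    rw [Complex.normSq_eq_norm_sq]
  rw [hz]; ring
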